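/- Let p ≥ 2, q = p/(p−1), δ = q(q−1)/8 and n ∈ ℕ. The Nazarov–Treil Bellman function Q(ζ,η) = (1/2)β(|ζ|,|η|) is continuously differentiable (of class C¹) on ℝ × ℝⁿ. -/

import Mathlib

open Real Filter Asymptotics

section helpers

lemma my_norm_rpow_isLittleO {G : Type*} [NormedAddCommGroup G] {c : ℝ} (hc : 1 < c) :
    (fun y : G => ‖y‖ ^ c) =o[nhds (0:G)] fun y => y := by
  rw [isLittleO_iff]
  intro ε hε
  have h1 : Filter.Tendsto (fun y : G => ‖y‖ ^ (c-1)) (nhds 0) (nhds 0) := by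
    have h0 : ContinuousAt (fun t : ℝ => t ^ (c-1)) 0 :=
      Real.continuousAt_rpow_const 0 (c-1) (Or.inr (by linarith))
    have := h0.tendsto.comp (by simpa using continuous_norm.tendsto (0:G))
    simpa [Function.comp_def, Real.zero_rpow (by linarith : c - 1 ≠ 0)] using this
  filter_upwards [h1.eventually (eventually_le_nhds hε)] with y hy
  rcases eq_or_lt_of_le (norm_nonneg y) with h0 | h0
  · simp [← h0, Real.zero_rpow (by linarith : c ≠ 0)]
  · have : ‖y‖ ^ c = ‖y‖ ^ (c-1) * ‖y‖ := by
      rw [← Real.rpow_add_one (ne_of_gt h0)]; ring_nf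
    rw [Real.norm_eq_abs, abs_of_nonneg (Real.rpow_nonneg (norm_nonneg y) c), this]
    exact mul_le_mul_of_nonneg_right hy (norm_nonneg y)

variable {E : Type*} [NormedAddCommGroup E] [InnerProductSpace ℝ E]

theorem my_hasFDerivAt_norm_rpow_ne (x : E) (hx : x ≠ 0) (c : ℝ) :
    HasFDerivAt (fun y : E => ‖y‖ ^ c) ((c * ‖x‖ ^ (c - 2)) • innerSL ℝ x) x := by
  apply HasStrictFDerivAt.hasFDerivAt
  convert (hasStrictFDerivAt_norm_sq x).rpow_const (p := c / 2) (Or.inl (by simp [hx])) using 0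
  simp_rw [← Real.rpow_natCast_mul (norm_nonneg _), ← Nat.cast_smul_eq_nsmul ℝ, smul_smul]
  ring_nf

end helpers

/-- The Nazarov–Treil Bellman auxiliary function `β`. -/
noncomputable def bell (p : ℝ) (u v : ℝ) : ℝ :=
  if u ^ p ≤ v ^ (p / (p - 1)) then
    u ^ p + v ^ (p / (p - 1)) +
      (p / (p - 1)) * (p / (p - 1) - 1) / 8 * (u ^ (2 : ℝ) * v ^ (2 - p / (p - 1)))
  else
    u ^ p + v ^ (p / (p - 1)) +
      (p / (p - 1)) * (p / (p - 1) - 1) / 8 *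
        ((2 / p) * u ^ p + (2 / (p / (p - 1)) - 1) * v ^ (p / (p - 1)))

/-- The Nazarov–Treil Bellman function `Q(ζ,η) = (1/2) β(|ζ|,|η|)` on `ℝ × ℝⁿ`. -/
noncomputable def bellQ (p : ℝ) (n : ℕ) (ξ : ℝ × EuclideanSpace ℝ (Fin n)) : ℝ :=
  (1 / 2) * bell p |ξ.1| ‖ξ.2‖

set_option maxHeartbeats 2000000 in
/-- For `p ≥ 2` the Nazarov–Treil Bellman function `Q` is of class `C¹`
on `ℝ × ℝⁿ`. -/
theorem bellQ_contDiff_one (p : ℝ) (hp : 2 ≤ p) (n : ℕ) :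
    ContDiff ℝ 1 (bellQ p n) := by
  rcases eq_or_lt_of_le hp with hp2 | hp2
  · -- p = 2
    have hb : bellQ p n = fun ξ : ℝ × EuclideanSpace ℝ (Fin n) =>
        (1/2) * ((5/4) * ξ.1 ^ 2 + ‖ξ.2‖ ^ 2) := by
      funext ξ
      subst hp2
      simp only [bellQ, bell]
      norm_num
      ring
    rw [hb]
    exact contDiff_const.mul ((contDiff_const.mul (contDiff_fst.pow 2)).add
      (contDiff_snd.norm_sq ℝ))
  · -- 2 < p
    have hp1 : (1:ℝ) < p := by linarith
    have hp0 : (0:ℝ) < p := by linarith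
    have hpm1 : (0:ℝ) < p - 1 := by linarith
    set q : ℝ := p / (p - 1) with hq
    have hq1 : 1 < q := (one_lt_div hpm1).2 (by linarith)
    have hq2 : q < 2 := by rw [hq, div_lt_iff₀ hpm1]; linarith
    have hq0 : 0 < q := by linarith
    have hpq : q * (p - 1) = p := div_mul_cancel₀ p (ne_of_gt hpm1)
    set δ : ℝ := q * (q - 1) / 8 with hδ
    have hδ0 : 0 < δ := by
      rw [hδ]
      have h1 : 0 < q - 1 := by linarith
      positivity

    -- basic continuity facts
    have cu : Continuous (fun ξ : ℝ × EuclideanSpace ℝ (Fin n) => |ξ.1| ^ p) :=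
      (Real.continuous_rpow_const hp0.le).comp continuous_fst.abs
    have cv : Continuous (fun ξ : ℝ × EuclideanSpace ℝ (Fin n) => ‖ξ.2‖ ^ q) :=
      (Real.continuous_rpow_const hq0.le).comp continuous_snd.norm
    set A : Set (ℝ × EuclideanSpace ℝ (Fin n)) := {ξ | |ξ.1| ^ p ≤ ‖ξ.2‖ ^ q} with hA
    set B : Set (ℝ × EuclideanSpace ℝ (Fin n)) := {ξ | ‖ξ.2‖ ^ q ≤ |ξ.1| ^ p} with hB
    have hAclosed : IsClosed A := isClosed_le cu cv
    have hBclosed : IsClosed B := isClosed_le cv cu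
    have hunion : A ∪ B = Set.univ := by
      apply Set.eq_univ_of_forall
      intro ξ
      rcases le_total (|ξ.1| ^ p) (‖ξ.2‖ ^ q) with h | h
      · exact Or.inl h
      · exact Or.inr h
    -- the two smooth pieces
    set QA : (ℝ × EuclideanSpace ℝ (Fin n)) → ℝ := fun ξ =>
      1/2 * ((|ξ.1| ^ p + ‖ξ.2‖ ^ q) + δ * (ξ.1 ^ 2 * ‖ξ.2‖ ^ (2 - q))) with hQA
    set QB : (ℝ × EuclideanSpace ℝ (Fin n)) → ℝ := fun ξ =>
      1/2 * ((|ξ.1| ^ p + ‖ξ.2‖ ^ q) + δ * ((2/p) * |ξ.1| ^ p + (2/q - 1) * ‖ξ.2‖ ^ q)) with hQB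
    have habs2 : ∀ t : ℝ, |t| ^ (2:ℝ) = t ^ 2 := fun t => by
      rw [show (2:ℝ) = ((2:ℕ):ℝ) by norm_num, Real.rpow_natCast, sq_abs]
    -- membership in A with η = 0 forces ζ = 0
    have hzero : ∀ ξ : ℝ × EuclideanSpace ℝ (Fin n), ξ ∈ A → ξ.2 = 0 → ξ.1 = 0 := by
      intro ξ hξ h0
      have h1 : |ξ.1| ^ p ≤ 0 := by
        have := hξ
        rw [hA] at this
        simpa [h0, Real.zero_rpow hq0.ne'] using this
      have h2 : |ξ.1| ^ p = 0 := le_antisymm h1 (Real.rpow_nonneg (abs_nonneg _) _)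
      have h3 : |ξ.1| = 0 := by
        rwa [Real.rpow_eq_zero (abs_nonneg _) hp0.ne'] at h2
      exact abs_eq_zero.1 h3
    -- boundary relation: v = u ^ (p-1)
    have hbdry : ∀ u v : ℝ, 0 ≤ u → 0 ≤ v → u ^ p = v ^ q → v = u ^ (p - 1) := by
      intro u v hu hv h
      have h1 : (v ^ q) ^ (1/q) = v := by
        rw [← Real.rpow_mul hv, mul_one_div, div_self hq0.ne', Real.rpow_one]
      have h2 : (u ^ p) ^ (1/q) = u ^ (p - 1) := by
        rw [← Real.rpow_mul hu]
        congr 1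
        rw [hq]
        field_simp
      rw [← h1, ← h, h2]
    have hqp : q / p = q - 1 := by
      rw [div_eq_iff hp0.ne']
      linear_combination -hpq
    -- boundary scalar identities
    have hb1 : ∀ u v : ℝ, 0 ≤ u → 0 ≤ v → u ^ p = v ^ q → v ^ (2 - q) = u ^ (p - 2) := by
      intro u v hu hv h
      rw [hbdry u v hu hv h, ← Real.rpow_mul hu]
      congr 1
      linear_combination -hpq
    have hb2 : ∀ u v : ℝ, 0 ≤ u → 0 ≤ v → u ^ p = v ^ q → v ^ (2*(q-1)) = u ^ 2 := by
      intro u v hu hv h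
      rw [hbdry u v hu hv h, ← Real.rpow_mul hu,
        show u ^ 2 = u ^ ((2:ℕ):ℝ) from (Real.rpow_natCast u 2).symm]
      congr 1
      push_cast
      linear_combination 2 * hpq
    have h2pq : 2/p + (2/q - 1) = 1 := by
      have h1 : 2/q = 2 * (p-1) / p := by
        rw [hq]
        field_simp
      rw [h1]
      field_simp
      ring
    -- value matching on the boundary
    have hbval : ∀ ξ : ℝ × EuclideanSpace ℝ (Fin n), |ξ.1| ^ p = ‖ξ.2‖ ^ q → QA ξ = QB ξ := by
      intro ξ h
      rw [hQA, hQB]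
      simp only
      have h3 : ξ.1 ^ 2 * ‖ξ.2‖ ^ (2 - q) = (2/p) * |ξ.1| ^ p + (2/q - 1) * ‖ξ.2‖ ^ q := by
        rw [hb1 _ _ (abs_nonneg _) (norm_nonneg _) h, ← h, ← sq_abs,
          show |ξ.1| ^ 2 = |ξ.1| ^ ((2:ℕ):ℝ) from (Real.rpow_natCast _ 2).symm,
          Real.rpow_natCast, ← Real.rpow_natCast |ξ.1| 2,
          ← Real.rpow_add' (abs_nonneg _) (by push_cast; intro hc; linarith [hc])]
        push_cast
        rw [show (2:ℝ) + (p - 2) = p by ring]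
        linear_combination (|ξ.1| ^ p) * h2pq.symm
      rw [h3]
    -- bellQ agrees with the pieces
    have hEqA : Set.EqOn (bellQ p n) QA A := by
      intro ξ hξ
      have hc : |ξ.1| ^ p ≤ ‖ξ.2‖ ^ q := hξ
      simp only [bellQ, bell, ← hq, hQA]
      rw [if_pos hc, habs2]
    have hEqB : Set.EqOn (bellQ p n) QB B := by
      intro ξ hξ
      have hc : ‖ξ.2‖ ^ q ≤ |ξ.1| ^ p := hξ
      by_cases hc2 : |ξ.1| ^ p ≤ ‖ξ.2‖ ^ q
      · have heq : |ξ.1| ^ p = ‖ξ.2‖ ^ q := le_antisymm hc2 hc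
        have h1 : bellQ p n ξ = QA ξ := hEqA hc2
        rw [h1, hbval ξ heq]
      · simp only [bellQ, bell, ← hq, hQB]
        rw [if_neg hc2]

    -- derivative field
    set fstL := ContinuousLinearMap.fst ℝ ℝ (EuclideanSpace ℝ (Fin n)) with hfstL
    set sndL := ContinuousLinearMap.snd ℝ ℝ (EuclideanSpace ℝ (Fin n)) with hsndL
    set sA : (ℝ × EuclideanSpace ℝ (Fin n)) → ℝ := fun ξ =>
      p/2 * (|ξ.1| ^ (p-2) * ξ.1) + δ * (ξ.1 * ‖ξ.2‖ ^ (2-q)) with hsA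
    set sB : (ℝ × EuclideanSpace ℝ (Fin n)) → ℝ := fun ξ =>
      (p/2 + δ) * (|ξ.1| ^ (p-2) * ξ.1) with hsB
    set wA : (ℝ × EuclideanSpace ℝ (Fin n)) → EuclideanSpace ℝ (Fin n) := fun ξ =>
      (q/2 * ‖ξ.2‖ ^ (q-2) + δ*(2-q)/2 * (ξ.1 ^ 2 * ‖ξ.2‖ ^ (-q))) • ξ.2 with hwA
    set wB : (ℝ × EuclideanSpace ℝ (Fin n)) → EuclideanSpace ℝ (Fin n) := fun ξ =>
      ((q/2 + δ*(2-q)/2) * ‖ξ.2‖ ^ (q-2)) • ξ.2 with hwB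
    set LA : (ℝ × EuclideanSpace ℝ (Fin n)) → ((ℝ × EuclideanSpace ℝ (Fin n)) →L[ℝ] ℝ) :=
      fun ξ => sA ξ • fstL + (innerSL ℝ (wA ξ)).comp sndL with hLA
    set LB : (ℝ × EuclideanSpace ℝ (Fin n)) → ((ℝ × EuclideanSpace ℝ (Fin n)) →L[ℝ] ℝ) :=
      fun ξ => sB ξ • fstL + (innerSL ℝ (wB ξ)).comp sndL with hLB
    set D : (ℝ × EuclideanSpace ℝ (Fin n)) → ((ℝ × EuclideanSpace ℝ (Fin n)) →L[ℝ] ℝ) :=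
      fun ξ => if |ξ.1| ^ p ≤ ‖ξ.2‖ ^ q then LA ξ else LB ξ with hD
    -- boundary matching of the derivative field
    have hABeq : ∀ ξ : ℝ × EuclideanSpace ℝ (Fin n), |ξ.1| ^ p = ‖ξ.2‖ ^ q → LA ξ = LB ξ := by
      intro ξ h
      have hsAB : sA ξ = sB ξ := by
        rw [hsA, hsB]
        simp only
        rw [show ξ.1 * ‖ξ.2‖ ^ (2-q) = ξ.1 * |ξ.1| ^ (p-2) by
          rw [hb1 _ _ (abs_nonneg _) (norm_nonneg _) h]]
        ring
      have hwAB : wA ξ = wB ξ := by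
        rcases eq_or_ne ξ.2 0 with h0 | h0
        · rw [hwA, hwB]; simp only [h0, smul_zero]
        · have hv : 0 < ‖ξ.2‖ := norm_pos_iff.2 h0
          rw [hwA, hwB]
          simp only
          congr 1
          have h1 : ξ.1 ^ 2 * ‖ξ.2‖ ^ (-q) = ‖ξ.2‖ ^ (q-2) := by
            rw [← sq_abs, ← hb2 _ _ (abs_nonneg _) (norm_nonneg _) h,
              ← Real.rpow_add hv]
            congr 1
            ring
          rw [h1]
          ring
      rw [hLA, hLB]
      simp only [hsAB, hwAB]
    -- the key bound on A
    have hA2 : ∀ ψ : ℝ × EuclideanSpace ℝ (Fin n), ψ ∈ A → ψ.1 ^ 2 ≤ ‖ψ.2‖ ^ (2*(q-1)) := by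
      intro ψ hψ
      have hmem : |ψ.1| ^ p ≤ ‖ψ.2‖ ^ q := hψ
      have h1 : |ψ.1| ≤ ‖ψ.2‖ ^ (q/p) := by
        have h2 : (|ψ.1| ^ p) ^ (1/p) ≤ (‖ψ.2‖ ^ q) ^ (1/p) :=
          Real.rpow_le_rpow (Real.rpow_nonneg (abs_nonneg _) _) hmem (by positivity)
        rw [← Real.rpow_mul (abs_nonneg _), ← Real.rpow_mul (norm_nonneg _),
          mul_one_div, div_self hp0.ne', Real.rpow_one, mul_one_div] at h2
        exact h2
      calc ψ.1 ^ 2 = |ψ.1| ^ 2 := (sq_abs _).symm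
        _ ≤ (‖ψ.2‖ ^ (q/p)) ^ 2 := by
            apply pow_le_pow_left₀ (abs_nonneg _) h1
        _ = ‖ψ.2‖ ^ (2*(q-1)) := by
            rw [← Real.rpow_natCast (‖ψ.2‖ ^ (q/p)) 2, ← Real.rpow_mul (norm_nonneg _)]
            congr 1
            push_cast
            rw [hqp]
            ring
    -- derivative of QB everywhere
    have hQBd : ∀ ξ : ℝ × EuclideanSpace ℝ (Fin n), HasFDerivAt QB (LB ξ) ξ := by
      intro ξ
      have h1 : HasFDerivAt (fun ξ : ℝ × EuclideanSpace ℝ (Fin n) => |ξ.1| ^ p)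
          ((p * |ξ.1| ^ (p-2) * ξ.1) • fstL) ξ :=
        (hasDerivAt_abs_rpow ξ.1 hp1).comp_hasFDerivAt ξ hasFDerivAt_fst
      have h2 : HasFDerivAt (fun ξ : ℝ × EuclideanSpace ℝ (Fin n) => ‖ξ.2‖ ^ q)
          (((q * ‖ξ.2‖ ^ (q-2)) • innerSL ℝ ξ.2).comp sndL) ξ :=
        (hasFDerivAt_norm_rpow ξ.2 hq1).comp ξ hasFDerivAt_snd
      have h3 := ((h1.add h2).add
        (((h1.const_mul (2/p)).add (h2.const_mul (2/q - 1))).const_mul δ)).const_mul (1/2 : ℝ)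
      have heq : QB = fun ξ : ℝ × EuclideanSpace ℝ (Fin n) =>
          (1/2 : ℝ) * ((|ξ.1| ^ p + ‖ξ.2‖ ^ q) +
            δ * ((2/p) * |ξ.1| ^ p + (2/q - 1) * ‖ξ.2‖ ^ q)) := by
        rw [hQB]
      rw [heq]
      have hL : LB ξ = (1 / 2 : ℝ) •
          ((p * |ξ.1| ^ (p - 2) * ξ.1) • fstL + ((q * ‖ξ.2‖ ^ (q - 2)) • innerSL ℝ ξ.2).comp sndL +
            δ • ((2 / p) • (p * |ξ.1| ^ (p - 2) * ξ.1) • fstL +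
              (2 / q - 1) • ((q * ‖ξ.2‖ ^ (q - 2)) • innerSL ℝ ξ.2).comp sndL)) := by
        refine ContinuousLinearMap.ext fun y => ?_
        simp only [hLB, hsB, hwB, ContinuousLinearMap.add_apply, ContinuousLinearMap.smul_apply,
          ContinuousLinearMap.coe_comp', Function.comp_apply, innerSL_apply_apply, smul_eq_mul,
          real_inner_smul_left]
        field_simp
        ring_nf
      rw [hL]
      exact h3
    -- derivative of QA on A
    have hQAd : ∀ ξ : ℝ × EuclideanSpace ℝ (Fin n), ξ ∈ A → HasFDerivAt QA (LA ξ) ξ := by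
      intro ξ hξ
      have h1 : HasFDerivAt (fun ξ : ℝ × EuclideanSpace ℝ (Fin n) => |ξ.1| ^ p)
          ((p * |ξ.1| ^ (p-2) * ξ.1) • fstL) ξ :=
        (hasDerivAt_abs_rpow ξ.1 hp1).comp_hasFDerivAt ξ hasFDerivAt_fst
      have h2 : HasFDerivAt (fun ξ : ℝ × EuclideanSpace ℝ (Fin n) => ‖ξ.2‖ ^ q)
          (((q * ‖ξ.2‖ ^ (q-2)) • innerSL ℝ ξ.2).comp sndL) ξ :=
        (hasFDerivAt_norm_rpow ξ.2 hq1).comp ξ hasFDerivAt_snd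
      have hT1T2 := h1.add h2
      rcases eq_or_ne ξ.2 0 with h0 | h0
      · -- zero case : ξ = 0
        have hζ : ξ.1 = 0 := hzero ξ hξ h0
        have hξ0 : ξ = 0 := Prod.ext_iff.2 ⟨by simpa using hζ, by simpa using h0⟩
        have h3 : HasFDerivAt (fun ξ : ℝ × EuclideanSpace ℝ (Fin n) =>
            ξ.1 ^ 2 * ‖ξ.2‖ ^ (2 - q)) (0 : (ℝ × EuclideanSpace ℝ (Fin n)) →L[ℝ] ℝ) ξ := by
          rw [hξ0, hasFDerivAt_iff_isLittleO_nhds_zero]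
          refine IsBigO.trans_isLittleO ?_ (my_norm_rpow_isLittleO (by linarith : (1:ℝ) < 4 - q))
          apply isBigO_of_le
          intro h
          simp only [zero_add, ContinuousLinearMap.zero_apply, sub_zero, Prod.fst_zero,
            Prod.snd_zero, norm_zero]
          rw [Real.zero_rpow (by linarith : (2:ℝ) - q ≠ 0)]
          rw [mul_zero, sub_zero, Real.norm_eq_abs, abs_of_nonneg
            (mul_nonneg (sq_nonneg _) (Real.rpow_nonneg (norm_nonneg _) _)),
            Real.norm_eq_abs, abs_of_nonneg (Real.rpow_nonneg (norm_nonneg _) _)]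
          have e2 : h.1 ^ 2 ≤ ‖h‖ ^ 2 := by
            rw [← sq_abs]
            exact pow_le_pow_left₀ (abs_nonneg _) (by simpa using norm_fst_le h) 2
          have e3 : ‖h.2‖ ^ (2 - q) ≤ ‖h‖ ^ (2 - q) :=
            Real.rpow_le_rpow (norm_nonneg _) (norm_snd_le h) (by linarith)
          calc h.1 ^ 2 * ‖h.2‖ ^ (2-q) ≤ ‖h‖ ^ 2 * ‖h‖ ^ (2-q) :=
                mul_le_mul e2 e3 (Real.rpow_nonneg (norm_nonneg _) _) (by positivity)
            _ = ‖h‖ ^ (4 - q) := by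
                rw [← Real.rpow_natCast ‖h‖ 2,
                  ← Real.rpow_add' (norm_nonneg _) (by push_cast; intro hc; linarith)]
                congr 1
                push_cast
                ring
        have h4 := (hT1T2.add (h3.const_mul δ)).const_mul (1/2 : ℝ)
        have hL : LA ξ = (1 / 2 : ℝ) •
            ((p * |ξ.1| ^ (p - 2) * ξ.1) • fstL +
              ((q * ‖ξ.2‖ ^ (q - 2)) • innerSL ℝ ξ.2).comp sndL +
              δ • (0 : (ℝ × EuclideanSpace ℝ (Fin n)) →L[ℝ] ℝ)) := by
          refine ContinuousLinearMap.ext fun y => ?_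
          simp only [hLA, hsA, hwA, ContinuousLinearMap.add_apply, ContinuousLinearMap.smul_apply,
            ContinuousLinearMap.coe_comp', Function.comp_apply, innerSL_apply_apply, smul_eq_mul,
            real_inner_smul_left, ContinuousLinearMap.zero_apply]
          rw [hζ, h0]
          simp
        rw [hQA, hL]
        exact h4
      · -- nonzero case
        have ha : HasFDerivAt (fun ξ : ℝ × EuclideanSpace ℝ (Fin n) => ξ.1 ^ 2)
            (((2:ℕ) * ξ.1 ^ 1) • fstL) ξ :=
          (hasDerivAt_pow 2 ξ.1).comp_hasFDerivAt ξ hasFDerivAt_fst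
        have hb : HasFDerivAt (fun ξ : ℝ × EuclideanSpace ℝ (Fin n) => ‖ξ.2‖ ^ (2 - q))
            ((((2-q) * ‖ξ.2‖ ^ (2-q-2)) • innerSL ℝ ξ.2).comp sndL) ξ :=
          (my_hasFDerivAt_norm_rpow_ne ξ.2 h0 (2-q)).comp ξ hasFDerivAt_snd
        rw [show (2:ℝ) - q - 2 = -q by ring] at hb
        have h3 := ha.mul hb
        have h4 := (hT1T2.add (h3.const_mul δ)).const_mul (1/2 : ℝ)
        have hL : LA ξ = (1 / 2 : ℝ) •
            ((p * |ξ.1| ^ (p - 2) * ξ.1) • fstL +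
              ((q * ‖ξ.2‖ ^ (q - 2)) • innerSL ℝ ξ.2).comp sndL +
              δ • (ξ.1 ^ 2 • (((2-q) * ‖ξ.2‖ ^ (-q)) • innerSL ℝ ξ.2).comp sndL +
                ‖ξ.2‖ ^ (2 - q) • ((2:ℕ) * ξ.1 ^ 1) • fstL)) := by
          refine ContinuousLinearMap.ext fun y => ?_
          simp only [hLA, hsA, hwA, ContinuousLinearMap.add_apply, ContinuousLinearMap.smul_apply,
            ContinuousLinearMap.coe_comp', Function.comp_apply, innerSL_apply_apply, smul_eq_mul,
            real_inner_smul_left]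
          push_cast
          ring
        rw [hQA, hL]
        exact h4
    -- glue the derivatives
    have hDeriv : ∀ ξ : ℝ × EuclideanSpace ℝ (Fin n), HasFDerivAt (bellQ p n) (D ξ) ξ := by
      intro ξ
      have hwithinA : HasFDerivWithinAt (bellQ p n) (D ξ) A ξ := by
        by_cases hξ : ξ ∈ A
        · have hDA : D ξ = LA ξ := by simp only [hD]; exact if_pos hξ
          rw [hDA]
          exact ((hQAd ξ hξ).hasFDerivWithinAt).congr (fun ψ hψ => hEqA hψ) (hEqA hξ)
        · exact HasFDerivWithinAt.of_notMem_closure (by rwa [hAclosed.closure_eq])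
      have hwithinB : HasFDerivWithinAt (bellQ p n) (D ξ) B ξ := by
        by_cases hξ : ξ ∈ B
        · have hDB : D ξ = LB ξ := by
            simp only [hD]
            by_cases hc : |ξ.1| ^ p ≤ ‖ξ.2‖ ^ q
            · rw [if_pos hc]
              exact hABeq ξ (le_antisymm hc hξ)
            · exact if_neg hc
          rw [hDB]
          exact ((hQBd ξ).hasFDerivWithinAt).congr (fun ψ hψ => hEqB hψ) (hEqB hξ)
        · exact HasFDerivWithinAt.of_notMem_closure (by rwa [hBclosed.closure_eq])
      have hu := hwithinA.union hwithinB
      rw [hunion] at hu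
      exact hu.hasFDerivAt (by simp)
    -- continuity of the derivative field
    have c1 : Continuous (fun ξ : ℝ × EuclideanSpace ℝ (Fin n) => |ξ.1| ^ (p-2)) :=
      (Real.continuous_rpow_const (by linarith)).comp continuous_fst.abs
    have c2 : Continuous (fun ξ : ℝ × EuclideanSpace ℝ (Fin n) => ‖ξ.2‖ ^ (2-q)) :=
      (Real.continuous_rpow_const (by linarith)).comp continuous_snd.norm
    have csA : Continuous sA := by
      rw [hsA]
      exact (continuous_const.mul (c1.mul continuous_fst)).add
        (continuous_const.mul (continuous_fst.mul c2))
    have csB : Continuous sB := by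
      rw [hsB]
      exact continuous_const.mul (c1.mul continuous_fst)
    have hinner : Continuous fun w : EuclideanSpace ℝ (Fin n) =>
        (((innerSL ℝ) w).comp sndL : (ℝ × EuclideanSpace ℝ (Fin n)) →L[ℝ] ℝ) := by
      have h1 := (((ContinuousLinearMap.compL ℝ (ℝ × EuclideanSpace ℝ (Fin n))
        (EuclideanSpace ℝ (Fin n)) ℝ).flip sndL).continuous).comp (innerSL ℝ).continuous
      exact h1
    have cwB : Continuous wB := by
      rw [continuous_iff_continuousAt]
      intro ξ
      by_cases h0 : ξ.2 = 0
      · have hval : wB ξ = 0 := by rw [hwB]; simp [h0]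
        rw [ContinuousAt, hval]
        have hbnd : ∀ ψ : ℝ × EuclideanSpace ℝ (Fin n),
            ‖wB ψ‖ ≤ |q/2 + δ*(2-q)/2| * ‖ψ.2‖ ^ (q-1) := by
          intro ψ
          rcases eq_or_ne ψ.2 0 with h1 | h1
          · simp [hwB, h1, Real.zero_rpow (show q - 1 ≠ 0 by linarith)]
          · have hv : (0:ℝ) < ‖ψ.2‖ := norm_pos_iff.2 h1
            rw [hwB]
            simp only
            rw [norm_smul, Real.norm_eq_abs, abs_mul,
              abs_of_nonneg (Real.rpow_nonneg (norm_nonneg _) _),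
              show ‖ψ.2‖ ^ (q-1) = ‖ψ.2‖ ^ (q-2) * ‖ψ.2‖ by
                rw [← Real.rpow_add_one hv.ne']; congr 1; ring]
            apply le_of_eq
            ring
        have hco : Continuous fun ψ : ℝ × EuclideanSpace ℝ (Fin n) =>
            |q/2 + δ*(2-q)/2| * ‖ψ.2‖ ^ (q-1) :=
          continuous_const.mul ((Real.continuous_rpow_const (by linarith)).comp
            continuous_snd.norm)
        have h2 := hco.tendsto ξ
        rw [h0] at h2
        refine squeeze_zero_norm hbnd ?_
        simpa [Real.zero_rpow (show q - 1 ≠ 0 by linarith)] using h2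
      · have hv : ‖ξ.2‖ ≠ 0 := norm_ne_zero_iff.2 h0
        rw [hwB]
        apply ContinuousAt.fun_smul
        · exact continuousAt_const.mul
            ((continuous_snd.norm.continuousAt).rpow_const (Or.inl hv))
        · exact continuous_snd.continuousAt
    have cLB : Continuous LB := by
      rw [hLB]
      exact (csB.smul continuous_const).add (hinner.comp cwB)
    have cwAon : ContinuousOn wA A := by
      intro ξ hξ
      by_cases h0 : ξ.2 = 0
      · have hval : wA ξ = 0 := by rw [hwA]; simp [h0]
        rw [ContinuousWithinAt, hval]
        have hbnd : ∀ᶠ ψ in nhdsWithin ξ A,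
            ‖wA ψ‖ ≤ (q/2 + δ*(2-q)/2) * ‖ψ.2‖ ^ (q-1) := by
          filter_upwards [self_mem_nhdsWithin] with ψ hψ
          rcases eq_or_ne ψ.2 0 with h1 | h1
          · simp [hwA, h1, Real.zero_rpow (show q - 1 ≠ 0 by linarith)]
          · have hv : (0:ℝ) < ‖ψ.2‖ := norm_pos_iff.2 h1
            have e1 : ‖ψ.2‖ ^ (q-2) * ‖ψ.2‖ = ‖ψ.2‖ ^ (q-1) := by
              rw [← Real.rpow_add_one hv.ne']; congr 1; ring
            have e2 : ‖ψ.2‖ ^ (-q) * ‖ψ.2‖ = ‖ψ.2‖ ^ (1-q) := by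
              rw [← Real.rpow_add_one hv.ne']; congr 1; ring
            have e3 : ‖ψ.2‖ ^ (2*(q-1)) * ‖ψ.2‖ ^ (1-q) = ‖ψ.2‖ ^ (q-1) := by
              rw [← Real.rpow_add hv]; congr 1; ring
            have hs0 : 0 ≤ q/2 * ‖ψ.2‖ ^ (q-2) + δ*(2-q)/2 * (ψ.1 ^ 2 * ‖ψ.2‖ ^ (-q)) := by
              apply add_nonneg
              · exact mul_nonneg (by linarith) (Real.rpow_nonneg (norm_nonneg _) _)
              · exact mul_nonneg (div_nonneg (mul_nonneg hδ0.le (by linarith)) (by norm_num))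
                  (mul_nonneg (sq_nonneg _) (Real.rpow_nonneg (norm_nonneg _) _))
            rw [hwA]
            simp only
            rw [norm_smul, Real.norm_eq_abs, abs_of_nonneg hs0]
            calc (q/2 * ‖ψ.2‖ ^ (q-2) + δ*(2-q)/2 * (ψ.1 ^ 2 * ‖ψ.2‖ ^ (-q))) * ‖ψ.2‖
                = q/2 * (‖ψ.2‖ ^ (q-2) * ‖ψ.2‖)
                  + δ*(2-q)/2 * (ψ.1 ^ 2 * (‖ψ.2‖ ^ (-q) * ‖ψ.2‖)) := by ring
              _ = q/2 * ‖ψ.2‖ ^ (q-1) + δ*(2-q)/2 * (ψ.1 ^ 2 * ‖ψ.2‖ ^ (1-q)) := by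
                  rw [e1, e2]
              _ ≤ q/2 * ‖ψ.2‖ ^ (q-1) + δ*(2-q)/2 * (‖ψ.2‖ ^ (2*(q-1)) * ‖ψ.2‖ ^ (1-q)) := by
                  refine add_le_add_right ?_ _
                  refine mul_le_mul_of_nonneg_left ?_
                    (div_nonneg (mul_nonneg hδ0.le (by linarith)) (by norm_num))
                  exact mul_le_mul_of_nonneg_right (hA2 ψ hψ)
                    (Real.rpow_nonneg (norm_nonneg ψ.2) (1-q))
              _ = (q/2 + δ*(2-q)/2) * ‖ψ.2‖ ^ (q-1) := by rw [e3]; ring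
        have hco : Continuous fun ψ : ℝ × EuclideanSpace ℝ (Fin n) =>
            (q/2 + δ*(2-q)/2) * ‖ψ.2‖ ^ (q-1) :=
          continuous_const.mul ((Real.continuous_rpow_const (by linarith)).comp
            continuous_snd.norm)
        have h2 := (hco.tendsto ξ).mono_left (nhdsWithin_le_nhds (s := A))
        rw [h0] at h2
        refine squeeze_zero_norm' hbnd ?_
        simpa [Real.zero_rpow (show q - 1 ≠ 0 by linarith)] using h2
      · apply ContinuousAt.continuousWithinAt
        have hv : ‖ξ.2‖ ≠ 0 := norm_ne_zero_iff.2 h0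
        rw [hwA]
        apply ContinuousAt.fun_smul
        · apply ContinuousAt.add
          · exact continuousAt_const.mul
              ((continuous_snd.norm.continuousAt).rpow_const (Or.inl hv))
          · exact continuousAt_const.mul (((continuous_fst.pow 2).continuousAt).mul
              ((continuous_snd.norm.continuousAt).rpow_const (Or.inl hv)))
        · exact continuous_snd.continuousAt
    have cLAon : ContinuousOn LA A := by
      rw [hLA]
      exact (csA.continuousOn.smul continuousOn_const).add (hinner.comp_continuousOn cwAon)
    have hDcont : Continuous D := by
      rw [hD]
      apply continuous_if_le cu cv
      · exact cLAon
      · exact cLB.continuousOn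
      · exact hABeq
    -- conclusion
    rw [contDiff_one_iff_fderiv]
    refine ⟨fun ξ => (hDeriv ξ).differentiableAt, ?_⟩
    have hfd : fderiv ℝ (bellQ p n) = D := funext fun ξ => (hDeriv ξ).fderiv
    rw [hfd]
    exact hDcont
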